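/- arXiv:1811.03475 — 2 statements merged into one kernel-verified Lean document; each statement's English description precedes it below -/
import Mathlib

section
/- Let ν ≥ 0, α > −1, n ∈ ℕ, and let P(x) = Σ_{k=0}^n a_k x^k be a real polynomial satisfying ∫₀^∞ P(x) x^{m+α} ρ_ν(x) dx = 0 for m = 0, 1, …, n−1. Define the associated polynomial Q(t) = Σ_{k=0}^n a_k (−1)^k k! t^k L_k^ν(t). Then ∫₀^∞ t^{ν+α+m} e^{-t} Q(t) dt = 0 for every m = 0, 1, …, n−1. -/
open MeasureTheory Real Set Finset

/-- The scaled Macdonald function `ρ_ν(x) = ∫₀^∞ t^(ν-1) e^(-t - x/t) dt`. -/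
noncomputable def rho (ν : ℝ) (x : ℝ) : ℝ :=
  ∫ t in Ioi (0:ℝ), t ^ (ν - 1) * Real.exp (-t - x / t)

/-- The generalized (associated) Laguerre polynomial `L_n^ν`. -/
noncomputable def laguerre (n : ℕ) (ν : ℝ) (t : ℝ) : ℝ :=
  ∑ k ∈ Finset.range (n + 1), ((-1 : ℝ) ^ k / k.factorial) *
    (Real.Gamma (n + ν + 1) / (Real.Gamma (k + ν + 1) * (n - k).factorial)) * t ^ k


/-- Rising factorial (Pochhammer) as a finite product over reals. -/
noncomputable def poch (x : ℝ) (n : ℕ) : ℝ := ∏ i ∈ Finset.range n, (x + i)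

lemma poch_zero (x : ℝ) : poch x 0 = 1 := by simp [poch]

lemma poch_succ (x : ℝ) (n : ℕ) : poch x (n + 1) = poch x n * (x + n) := by
  simp [poch, Finset.prod_range_succ]

lemma poch_succ' (x : ℝ) (n : ℕ) : poch x (n + 1) = x * poch (x + 1) n := by
  unfold poch
  rw [Finset.prod_range_succ']
  simp only [Nat.cast_zero, add_zero, Nat.cast_add, Nat.cast_one]
  rw [mul_comm]
  congr 1
  exact Finset.prod_congr rfl fun i _ => by ring

lemma gamma_poch {x : ℝ} (hx : 0 < x) (n : ℕ) :
    Real.Gamma (x + n) = Real.Gamma x * poch x n := by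
  induction n with
  | zero => simp [poch_zero]
  | succ n ih =>
    have h1 : x + (n + 1 : ℕ) = (x + n) + 1 := by push_cast; ring
    rw [h1, Real.Gamma_add_one (by positivity), ih, poch_succ]
    ring

lemma poch_reflect (x : ℝ) (k : ℕ) :
    poch (-(x + k)) k = (-1 : ℝ) ^ k * poch (x + 1) k := by
  unfold poch
  rw [← Finset.prod_range_reflect (fun i => -(x + k) + i) k]
  rw [show ((-1:ℝ))^k = ∏ _i ∈ Finset.range k, (-1 : ℝ) by simp, ← Finset.prod_mul_distrib]
  refine Finset.prod_congr rfl fun i hi => ?_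
  have hik : i < k := Finset.mem_range.mp hi
  have : ((k - 1 - i : ℕ) : ℝ) = (k : ℝ) - 1 - i := by
    have h1 : k - 1 - i = k - (i + 1) := by omega
    rw [h1, Nat.cast_sub (by omega)]
    push_cast; ring
  rw [this]
  ring

/-- Vandermonde-type identity for Pochhammer symbols. -/
lemma vand (k : ℕ) : ∀ c d : ℝ,
    ∑ j ∈ Finset.range (k + 1), (-1 : ℝ) ^ j * (k.choose j : ℝ) * poch c j * poch (d + j) (k - j)
      = poch (d - c) k := by
  induction k with
  | zero => intro c d; simp [poch_zero]
  | succ k ih =>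
    intro c d
    have peel : ∀ (f : ℕ → ℝ), ∑ j ∈ Finset.range (k + 2), f j
        = f 0 + ∑ j ∈ Finset.range (k + 1), f (j + 1) := by
      intro f; rw [Finset.sum_range_succ', add_comm]
    rw [peel]
    have expand : ∀ j ∈ Finset.range (k + 1),
        (-1 : ℝ) ^ (j+1) * ((k+1).choose (j+1) : ℝ) * poch c (j+1) * poch (d + (j+1 : ℕ)) (k + 1 - (j+1))
        = (-((-1:ℝ)^j) * (k.choose j : ℝ) * (c * poch (c + 1) j) * poch ((d+1) + j) (k - j))
          + (-((-1:ℝ)^j) * (k.choose (j+1) : ℝ) * poch c (j+1) * poch (d + (j+1:ℕ)) (k - j)) := by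
      intro j hj
      have : ((k+1).choose (j+1) : ℝ) = (k.choose j : ℝ) + (k.choose (j+1) : ℝ) := by
        rw [Nat.choose_succ_succ]; push_cast; ring
      rw [this, poch_succ' c j]
      have h2 : (d + ((j:ℕ)+1:ℕ) : ℝ) = (d + 1) + j := by push_cast; ring
      have h3 : k + 1 - (j + 1) = k - j := by omega
      rw [h3]
      rw [show (d + ((j+1:ℕ):ℝ)) = (d+1) + (j:ℝ) by push_cast; ring]
      ring
    rw [Finset.sum_congr rfl expand, Finset.sum_add_distrib]
    have part1 : ∑ j ∈ Finset.range (k + 1),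
        (-((-1:ℝ)^j) * (k.choose j : ℝ) * (c * poch (c + 1) j) * poch ((d+1) + j) (k - j))
        = -c * poch (d - c) k := by
      have := ih (c+1) (d+1)
      rw [show d + 1 - (c + 1) = d - c by ring] at this
      calc ∑ j ∈ Finset.range (k + 1),
            (-((-1:ℝ)^j) * (k.choose j : ℝ) * (c * poch (c + 1) j) * poch ((d+1) + j) (k - j))
          = -c * ∑ j ∈ Finset.range (k + 1),
            ((-1:ℝ)^j * (k.choose j : ℝ) * poch (c + 1) j * poch ((d+1) + j) (k - j)) := by
            rw [Finset.mul_sum]; exact Finset.sum_congr rfl fun j _ => by ring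
        _ = -c * poch (d - c) k := by rw [this]
    rw [part1]
    -- now handle the remaining part: f 0 + Σ (second parts) = (d + k) * poch (d-c) k
    have part2 : (-1 : ℝ) ^ 0 * ((k+1).choose 0 : ℝ) * poch c 0 * poch (d + (0:ℕ)) (k + 1 - 0)
        + ∑ j ∈ Finset.range (k + 1),
          (-((-1:ℝ)^j) * (k.choose (j+1) : ℝ) * poch c (j+1) * poch (d + (j+1:ℕ)) (k - j))
        = (d + k) * poch (d - c) k := by
      have reassemble : (-1 : ℝ) ^ 0 * ((k+1).choose 0 : ℝ) * poch c 0 * poch (d + (0:ℕ)) (k + 1 - 0)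
          + ∑ j ∈ Finset.range (k + 1),
            (-((-1:ℝ)^j) * (k.choose (j+1) : ℝ) * poch c (j+1) * poch (d + (j+1:ℕ)) (k - j))
          = ∑ j ∈ Finset.range (k + 2),
            ((-1:ℝ)^j * (k.choose j : ℝ) * poch c j * poch (d + j) (k + 1 - j)) := by
        rw [peel (fun j => (-1:ℝ)^j * (k.choose j : ℝ) * poch c j * poch (d + j) (k + 1 - j))]
        congr 1
        · simp
        · refine Finset.sum_congr rfl fun j hj => ?_
          have h3 : k + 1 - (j + 1) = k - j := by omega
          rw [h3]; ring
      rw [reassemble, Finset.sum_range_succ]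
      have hlast : (-1:ℝ)^(k+1) * (k.choose (k+1) : ℝ) * poch c (k+1) * poch (d + (k+1:ℕ)) (k + 1 - (k+1)) = 0 := by
        rw [Nat.choose_succ_self]; simp
      rw [hlast, add_zero]
      have : ∀ j ∈ Finset.range (k+1),
          (-1:ℝ)^j * (k.choose j : ℝ) * poch c j * poch (d + j) (k + 1 - j)
          = (d + k) * ((-1:ℝ)^j * (k.choose j : ℝ) * poch c j * poch (d + j) (k - j)) := by
        intro j hj
        have hjk : j ≤ k := by have := Finset.mem_range.mp hj; omega
        have h4 : k + 1 - j = (k - j) + 1 := by omega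
        rw [h4, poch_succ]
        have : (d + (j:ℝ)) + ((k - j : ℕ) : ℝ) = d + k := by
          rw [Nat.cast_sub hjk]; ring
        rw [this]; ring
      rw [Finset.sum_congr rfl this, ← Finset.mul_sum, ih c d]
    rw [poch_succ]
    linear_combination part2

lemma poch_gamma {x : ℝ} (hx : 0 < x) (n : ℕ) :
    poch x n = Real.Gamma (x + n) / Real.Gamma x := by
  rw [gamma_poch hx n]
  field_simp [Real.Gamma_pos_of_pos hx |>.ne']

/-- The key per-`k` Gamma-sum identity coming from the Laguerre moment computation. -/
lemma key_sum (ν y : ℝ) (hν : 0 ≤ ν) (hy : 0 < y + 1) (k : ℕ) :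
    ∑ j ∈ Finset.range (k + 1),
      ((-1:ℝ)^j / j.factorial) *
        (Real.Gamma ((k:ℝ) + ν + 1) / (Real.Gamma ((j:ℝ) + ν + 1) * (k - j).factorial)) *
        Real.Gamma ((k:ℝ) + (y + 1) + ν + (j:ℝ))
    = ((-1:ℝ)^k / k.factorial) *
        (Real.Gamma ((k:ℝ) + (y + 1)) * Real.Gamma ((k:ℝ) + (y + 1) + ν) / Real.Gamma (y + 1)) := by
  set c : ℝ := (k:ℝ) + (y + 1) + ν with hc
  have hcpos : 0 < c := by positivity
  have hd : (0:ℝ) < ν + 1 := by linarith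
  have hstep : ∀ j ∈ Finset.range (k + 1),
      ((-1:ℝ)^j / j.factorial) *
        (Real.Gamma ((k:ℝ) + ν + 1) / (Real.Gamma ((j:ℝ) + ν + 1) * (k - j).factorial)) *
        Real.Gamma ((k:ℝ) + (y + 1) + ν + (j:ℝ))
      = (Real.Gamma c / k.factorial) *
          ((-1:ℝ)^j * (k.choose j : ℝ) * poch c j * poch ((ν + 1) + (j:ℝ)) (k - j)) := by
    intro j hj
    have hjk : j ≤ k := by have := Finset.mem_range.mp hj; omega
    have hjpos : (0:ℝ) < (j:ℝ) + ν + 1 := by positivity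
    -- Gamma (k + ν + 1) = Gamma (j + ν + 1) * poch ((ν+1) + j) (k - j)
    have e1 : Real.Gamma ((k:ℝ) + ν + 1)
        = Real.Gamma ((j:ℝ) + ν + 1) * poch ((ν + 1) + (j:ℝ)) (k - j) := by
      have := gamma_poch (show (0:ℝ) < (ν + 1) + (j:ℝ) by positivity) (k - j)
      rw [show ((ν + 1) + (j:ℝ)) + ((k - j : ℕ) : ℝ) = (k:ℝ) + ν + 1 by
            rw [Nat.cast_sub hjk]; ring,
          show Real.Gamma ((ν + 1) + (j:ℝ)) = Real.Gamma ((j:ℝ) + ν + 1) by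
            congr 1; ring] at this
      exact this
    have e2 : Real.Gamma ((k:ℝ) + (y + 1) + ν + (j:ℝ)) = Real.Gamma c * poch c j := by
      have := gamma_poch hcpos j
      rw [← this]
    have e3 : (k.factorial : ℝ) = (k.choose j : ℝ) * j.factorial * (k - j).factorial := by
      rw [← Nat.choose_mul_factorial_mul_factorial hjk]; push_cast; ring
    rw [e1, e2, e3]
    have h1 : (Real.Gamma ((j:ℝ) + ν + 1)) ≠ 0 := (Real.Gamma_pos_of_pos hjpos).ne'
    have h2 : ((j.factorial : ℝ)) ≠ 0 := by positivity
    have h3 : (((k - j).factorial : ℝ)) ≠ 0 := by positivity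
    have h4 : ((k.choose j : ℝ)) ≠ 0 := Nat.cast_ne_zero.mpr (Nat.choose_pos hjk).ne'
    field_simp
  rw [Finset.sum_congr rfl hstep, ← Finset.mul_sum, vand k c (ν + 1)]
  have e4 : (ν + 1) - c = -(y + (k:ℝ)) := by rw [hc]; ring
  rw [e4, show (-(y + (k:ℝ))) = -(y + (k:ℕ)) by norm_num, poch_reflect y k,
      poch_gamma (show (0:ℝ) < y + 1 by linarith) k]
  have h5 : Real.Gamma (y + 1) ≠ 0 := (Real.Gamma_pos_of_pos hy).ne'
  have h6 : ((k.factorial : ℝ)) ≠ 0 := by positivity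
  rw [show Real.Gamma (y + 1 + (k:ℝ)) = Real.Gamma ((k:ℝ) + (y+1)) by congr 1; ring]
  field_simp

lemma exp_integrable {r s : ℝ} (hs : 0 < s) (hr : 0 < r) :
    IntegrableOn (fun x : ℝ => x ^ (s - 1) * Real.exp (-(r * x))) (Ioi 0) := by
  have h := integrableOn_rpow_mul_exp_neg_mul_rpow (s := s - 1) (p := 1) (b := r)
    (by linarith) zero_lt_one hr
  refine h.congr_fun (fun x hx => ?_) measurableSet_Ioi
  simp only [Real.rpow_one, neg_mul]

lemma rho_meas (ν : ℝ) : Measurable (fun p : ℝ × ℝ => p.1 ^ (ν - 1) * Real.exp (-p.1 - p.2 / p.1)) := by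
  fun_prop

lemma rho_nonneg (ν x : ℝ) : 0 ≤ rho ν x := by
  refine integral_nonneg_of_ae ?_
  filter_upwards [self_mem_ae_restrict (measurableSet_Ioi : MeasurableSet (Ioi (0:ℝ)))] with t ht
  have : (0:ℝ) < t := ht
  positivity

lemma rho_moment (ν s : ℝ) (hs : 0 < s) (hsν : 0 < s + ν) :
    IntegrableOn (fun x => x ^ (s - 1) * rho ν x) (Ioi 0) ∧
      ∫ x in Ioi (0:ℝ), x ^ (s - 1) * rho ν x = Real.Gamma s * Real.Gamma (s + ν) := by
  set μ := volume.restrict (Ioi (0:ℝ)) with hμ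
  set f : ℝ → ℝ → ℝ := fun t x => x ^ (s - 1) * (t ^ (ν - 1) * Real.exp (-t - x / t)) with hf
  have hfmeas : Measurable (Function.uncurry f) := by
    apply Measurable.mul
    · fun_prop
    · exact (rho_meas ν).comp measurable_id
  have hofmeas : Measurable (fun p : ℝ × ℝ => ENNReal.ofReal (Function.uncurry f p)) :=
    ENNReal.measurable_ofReal.comp hfmeas
  -- inner integral over x, for fixed t > 0
  have inner_x : ∀ t ∈ Ioi (0:ℝ), (∫⁻ x, ENNReal.ofReal (f t x) ∂μ)
      = ENNReal.ofReal (t ^ (ν - 1) * Real.exp (-t)) * ENNReal.ofReal (t ^ s * Real.Gamma s) := by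
    intro t ht
    have ht' : (0:ℝ) < t := ht
    have hsplit : ∀ x : ℝ, f t x
        = (t ^ (ν - 1) * Real.exp (-t)) * (x ^ (s - 1) * Real.exp (-(1/t * x))) := by
      intro x
      have : -t - x / t = (-t) + (-(1/t * x)) := by ring
      rw [hf]; simp only []
      rw [this, Real.exp_add]; ring
    have hC : (0:ℝ) ≤ t ^ (ν - 1) * Real.exp (-t) := by positivity
    calc ∫⁻ x, ENNReal.ofReal (f t x) ∂μ
        = ∫⁻ x, ENNReal.ofReal (t ^ (ν - 1) * Real.exp (-t))
            * ENNReal.ofReal (x ^ (s - 1) * Real.exp (-(1/t * x))) ∂μ := by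
          refine lintegral_congr fun x => ?_
          rw [hsplit x, ENNReal.ofReal_mul hC]
      _ = ENNReal.ofReal (t ^ (ν - 1) * Real.exp (-t))
            * ∫⁻ x, ENNReal.ofReal (x ^ (s - 1) * Real.exp (-(1/t * x))) ∂μ := by
          rw [lintegral_const_mul' _ _ ENNReal.ofReal_ne_top]
      _ = ENNReal.ofReal (t ^ (ν - 1) * Real.exp (-t)) * ENNReal.ofReal (t ^ s * Real.Gamma s) := by
          congr 1
          rw [← ofReal_integral_eq_lintegral_ofReal (exp_integrable hs (by positivity))]
          · rw [integral_rpow_mul_exp_neg_mul_Ioi hs (by positivity), one_div_one_div]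
          · filter_upwards [self_mem_ae_restrict (measurableSet_Ioi : MeasurableSet (Ioi (0:ℝ)))]
              with x hx
            have : (0:ℝ) < x := hx
            positivity
  -- the double integral
  have JB : (∫⁻ t, ∫⁻ x, ENNReal.ofReal (f t x) ∂μ ∂μ)
      = ENNReal.ofReal (Real.Gamma s * Real.Gamma (s + ν)) := by
    rw [hμ, setLIntegral_congr_fun measurableSet_Ioi
      (fun t ht => inner_x t ht)]
    have hptwise : ∀ t ∈ Ioi (0:ℝ),
        ENNReal.ofReal (t ^ (ν - 1) * Real.exp (-t)) * ENNReal.ofReal (t ^ s * Real.Gamma s)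
        = ENNReal.ofReal (Real.Gamma s * (Real.exp (-t) * t ^ (s + ν - 1))) := by
      intro t ht
      have ht' : (0:ℝ) < t := ht
      rw [← ENNReal.ofReal_mul (by positivity)]
      congr 1
      rw [show s + ν - 1 = (ν - 1) + s by ring, Real.rpow_add ht']
      ring
    rw [setLIntegral_congr_fun measurableSet_Ioi
      (fun t ht => hptwise t ht)]
    rw [← ofReal_integral_eq_lintegral_ofReal
      (((Real.GammaIntegral_convergent hsν)).const_mul _)]
    · rw [integral_const_mul, ← Real.Gamma_eq_integral hsν]
    · filter_upwards [self_mem_ae_restrict (measurableSet_Ioi : MeasurableSet (Ioi (0:ℝ)))]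
        with t ht
      have : (0:ℝ) < t := ht
      positivity
  -- swap
  have hswap : (∫⁻ x, ∫⁻ t, ENNReal.ofReal (f t x) ∂μ ∂μ)
      = ENNReal.ofReal (Real.Gamma s * Real.Gamma (s + ν)) := by
    have h1 := lintegral_lintegral_swap (μ := μ) (ν := μ)
      (f := fun x t => ENNReal.ofReal (f t x))
      ((hofmeas.comp measurable_swap).aemeasurable)
    exact h1.trans JB
  -- measurability of inner-in-t integral as a function of x
  have hGmeas : Measurable (fun x => ∫⁻ t, ENNReal.ofReal (f t x) ∂μ) := by
    apply Measurable.lintegral_prod_right (f := fun x t => ENNReal.ofReal (f t x))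
    exact hofmeas.comp measurable_swap
  have hae : ∀ᵐ x ∂μ, (∫⁻ t, ENNReal.ofReal (f t x) ∂μ) < ⊤ := by
    apply ae_lt_top hGmeas
    rw [hswap]; exact ENNReal.ofReal_ne_top
  -- pointwise a.e. identification with x ^ (s-1) * rho ν x
  have hkey : ∀ᵐ x ∂μ, ENNReal.ofReal (x ^ (s - 1) * rho ν x)
      = ∫⁻ t, ENNReal.ofReal (f t x) ∂μ := by
    filter_upwards [hae, self_mem_ae_restrict (measurableSet_Ioi : MeasurableSet (Ioi (0:ℝ)))]
      with x hfin hx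
    have hx' : (0:ℝ) < x := hx
    have hpull : ∀ t : ℝ, ENNReal.ofReal (f t x)
        = ENNReal.ofReal (x ^ (s - 1)) * ENNReal.ofReal (t ^ (ν - 1) * Real.exp (-t - x / t)) := by
      intro t
      rw [hf]; exact ENNReal.ofReal_mul (by positivity)
    have hconst : (∫⁻ t, ENNReal.ofReal (f t x) ∂μ)
        = ENNReal.ofReal (x ^ (s - 1))
          * ∫⁻ t, ENNReal.ofReal (t ^ (ν - 1) * Real.exp (-t - x / t)) ∂μ := by
      rw [← lintegral_const_mul' _ _ ENNReal.ofReal_ne_top]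
      exact lintegral_congr fun t => hpull t
    have hfin2 : (∫⁻ t, ENNReal.ofReal (t ^ (ν - 1) * Real.exp (-t - x / t)) ∂μ) ≠ ⊤ := by
      by_cases hzero : ENNReal.ofReal (x ^ (s - 1)) = 0
      · -- impossible since x > 0
        exfalso
        rw [ENNReal.ofReal_eq_zero] at hzero
        have : (0:ℝ) < x ^ (s - 1) := by positivity
        linarith
      · have := hfin
        rw [hconst] at this
        exact (ENNReal.lt_top_of_mul_ne_top_right this.ne hzero).ne
    have hphimeas : Measurable (fun t : ℝ => t ^ (ν - 1) * Real.exp (-t - x / t)) := by fun_prop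
    have hphinn : 0 ≤ᵐ[μ] fun t : ℝ => t ^ (ν - 1) * Real.exp (-t - x / t) := by
      filter_upwards [self_mem_ae_restrict (measurableSet_Ioi : MeasurableSet (Ioi (0:ℝ)))]
        with t ht
      have : (0:ℝ) < t := ht
      positivity
    have hint : Integrable (fun t : ℝ => t ^ (ν - 1) * Real.exp (-t - x / t)) μ :=
      ⟨hphimeas.aestronglyMeasurable, (hasFiniteIntegral_iff_ofReal hphinn).mpr hfin2.lt_top⟩
    have hrho : ENNReal.ofReal (rho ν x)
        = ∫⁻ t, ENNReal.ofReal (t ^ (ν - 1) * Real.exp (-t - x / t)) ∂μ := by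
      rw [rho, hμ]
      exact ofReal_integral_eq_lintegral_ofReal hint hphinn
    rw [ENNReal.ofReal_mul (by positivity), hrho, hconst]
  -- measurability of x ↦ x ^ (s-1) * rho ν x
  have hrho_sm : StronglyMeasurable (rho ν) := by
    apply MeasureTheory.StronglyMeasurable.integral_prod_right
      (f := fun x t => t ^ (ν - 1) * Real.exp (-t - x / t))
    exact ((rho_meas ν).comp measurable_swap).stronglyMeasurable
  have hg_sm : AEStronglyMeasurable (fun x => x ^ (s - 1) * rho ν x) μ :=
    ((measurable_id.pow_const _ |>.mul hrho_sm.measurable)).aestronglyMeasurable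
  have hg_nn : 0 ≤ᵐ[μ] fun x => x ^ (s - 1) * rho ν x := by
    filter_upwards [self_mem_ae_restrict (measurableSet_Ioi : MeasurableSet (Ioi (0:ℝ)))]
      with x hx
    have hx' : (0:ℝ) < x := hx
    have := rho_nonneg ν x
    positivity
  have hlin : (∫⁻ x, ENNReal.ofReal (x ^ (s - 1) * rho ν x) ∂μ)
      = ENNReal.ofReal (Real.Gamma s * Real.Gamma (s + ν)) := by
    rw [lintegral_congr_ae hkey, hswap]
  have hint : Integrable (fun x => x ^ (s - 1) * rho ν x) μ :=
    ⟨hg_sm, (hasFiniteIntegral_iff_ofReal hg_nn).mpr (by rw [hlin]; exact ENNReal.ofReal_lt_top)⟩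
  refine ⟨hint, ?_⟩
  rw [integral_eq_lintegral_of_nonneg_ae hg_nn hg_sm]
  rw [show (∫⁻ x, ENNReal.ofReal (x ^ (s - 1) * rho ν x) ∂(volume.restrict (Ioi 0)))
      = ENNReal.ofReal (Real.Gamma s * Real.Gamma (s + ν)) from hlin]
  rw [ENNReal.toReal_ofReal]
  have := Real.Gamma_pos_of_pos hs
  have := Real.Gamma_pos_of_pos hsν
  positivity

theorem associated_polynomial_moments_vanish
    (ν α : ℝ) (hν : 0 ≤ ν) (hα : -1 < α) (n : ℕ) (hn : 1 ≤ n) (a : ℕ → ℝ)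
    (horth : ∀ m < n,
      ∫ x in Ioi (0:ℝ),
        (∑ k ∈ Finset.range (n + 1), a k * x ^ k) * x ^ ((m : ℝ) + α) * rho ν x = 0) :
    ∀ m < n,
      ∫ t in Ioi (0:ℝ), t ^ (ν + α + (m : ℝ)) * Real.exp (-t) *
        (∑ k ∈ Finset.range (n + 1),
          a k * (-1 : ℝ) ^ k * k.factorial * t ^ k * laguerre k ν t) = 0 := by
  intro m hm
  set w : ℝ := (m : ℝ) + α with hwdef
  have hm0 : (0:ℝ) ≤ (m:ℝ) := Nat.cast_nonneg m
  have hw1 : (0:ℝ) < w + 1 := by rw [hwdef]; linarith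
  have hs : ∀ k : ℕ, (0:ℝ) < (k:ℝ) + (w + 1) := by
    intro k; have : (0:ℝ) ≤ (k:ℝ) := Nat.cast_nonneg k; linarith
  have hsν : ∀ k : ℕ, (0:ℝ) < (k:ℝ) + (w + 1) + ν := by
    intro k; have := hs k; linarith
  have hrm := fun k : ℕ => rho_moment ν ((k:ℝ) + (w + 1)) (hs k) (hsν k)
  -- Step 1 : from the orthogonality hypothesis
  have E : ∑ k ∈ Finset.range (n + 1),
      a k * (Real.Gamma ((k:ℝ) + (w + 1)) * Real.Gamma ((k:ℝ) + (w + 1) + ν)) = 0 := by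
    have h0 := horth m hm
    have hcong : ∫ x in Ioi (0:ℝ),
        (∑ k ∈ Finset.range (n + 1), a k * x ^ k) * x ^ ((m : ℝ) + α) * rho ν x
        = ∫ x in Ioi (0:ℝ),
          ∑ k ∈ Finset.range (n + 1), a k * (x ^ ((k:ℝ) + (w + 1) - 1) * rho ν x) := by
      refine setIntegral_congr_fun measurableSet_Ioi (fun x hx => ?_)
      have hx' : (0:ℝ) < x := hx
      rw [Finset.sum_mul, Finset.sum_mul]
      refine Finset.sum_congr rfl fun k _ => ?_
      have hxsplit : x ^ ((k:ℝ) + (w + 1) - 1) = x ^ k * x ^ ((m:ℝ) + α) := by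
        rw [show ((k:ℝ) + (w + 1) - 1) = (k:ℝ) + ((m:ℝ) + α) by rw [hwdef]; ring,
          Real.rpow_add hx', Real.rpow_natCast]
      rw [hxsplit]
      ring
    have hsum : ∫ x in Ioi (0:ℝ),
        ∑ k ∈ Finset.range (n + 1), a k * (x ^ ((k:ℝ) + (w + 1) - 1) * rho ν x)
        = ∑ k ∈ Finset.range (n + 1),
          a k * (Real.Gamma ((k:ℝ) + (w + 1)) * Real.Gamma ((k:ℝ) + (w + 1) + ν)) := by
      rw [MeasureTheory.integral_finset_sum]
      · exact Finset.sum_congr rfl fun k _ => by rw [integral_const_mul, (hrm k).2]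
      · exact fun k _ => ((hrm k).1.const_mul (a k))
    rw [← hsum, ← hcong, h0]
  -- Step 2 : the target integral
  have hppos : ∀ k j : ℕ, (0:ℝ) < (k:ℝ) + (w + 1) + ν + (j:ℝ) := by
    intro k j
    have := hsν k; have : (0:ℝ) ≤ (j:ℝ) := Nat.cast_nonneg j
    have := hsν k; linarith
  have hbint : ∀ k j : ℕ,
      IntegrableOn (fun t : ℝ => Real.exp (-t) * t ^ ((k:ℝ) + (w + 1) + ν + (j:ℝ) - 1))
        (Ioi 0) := fun k j => Real.GammaIntegral_convergent (hppos k j)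
  have hbval : ∀ k j : ℕ,
      (∫ t in Ioi (0:ℝ), Real.exp (-t) * t ^ ((k:ℝ) + (w + 1) + ν + (j:ℝ) - 1))
        = Real.Gamma ((k:ℝ) + (w + 1) + ν + (j:ℝ)) :=
    fun k j => (Real.Gamma_eq_integral (hppos k j)).symm
  have hcong2 : ∫ t in Ioi (0:ℝ), t ^ (ν + α + (m : ℝ)) * Real.exp (-t) *
        (∑ k ∈ Finset.range (n + 1),
          a k * (-1 : ℝ) ^ k * k.factorial * t ^ k * laguerre k ν t)
      = ∫ t in Ioi (0:ℝ), ∑ k ∈ Finset.range (n + 1), ∑ j ∈ Finset.range (k + 1),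
          (a k * (-1 : ℝ) ^ k * k.factorial *
            (((-1:ℝ)^j / j.factorial) *
              (Real.Gamma ((k:ℝ) + ν + 1) / (Real.Gamma ((j:ℝ) + ν + 1) * (k - j).factorial))))
          * (Real.exp (-t) * t ^ ((k:ℝ) + (w + 1) + ν + (j:ℝ) - 1)) := by
    refine setIntegral_congr_fun measurableSet_Ioi (fun t ht => ?_)
    have ht' : (0:ℝ) < t := ht
    rw [Finset.mul_sum]
    refine Finset.sum_congr rfl fun k _ => ?_
    rw [laguerre, Finset.mul_sum, Finset.mul_sum]
    refine Finset.sum_congr rfl fun j _ => ?_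
    have htsplit : t ^ ((k:ℝ) + (w + 1) + ν + (j:ℝ) - 1)
        = t ^ (ν + α + (m:ℝ)) * t ^ k * t ^ j := by
      rw [show ((k:ℝ) + (w + 1) + ν + (j:ℝ) - 1) = (ν + α + (m:ℝ)) + (k:ℝ) + (j:ℝ) by
          rw [hwdef]; ring,
        Real.rpow_add ht', Real.rpow_add ht', Real.rpow_natCast, Real.rpow_natCast]
    rw [htsplit]
    ring
  rw [hcong2]
  rw [MeasureTheory.integral_finset_sum _ (fun k _ =>
    integrable_finset_sum _ (fun j _ => ((hbint k j).const_mul _)))]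
  have hinner : ∀ k ∈ Finset.range (n + 1),
      (∫ t in Ioi (0:ℝ), ∑ j ∈ Finset.range (k + 1),
          (a k * (-1 : ℝ) ^ k * k.factorial *
            (((-1:ℝ)^j / j.factorial) *
              (Real.Gamma ((k:ℝ) + ν + 1) / (Real.Gamma ((j:ℝ) + ν + 1) * (k - j).factorial))))
          * (Real.exp (-t) * t ^ ((k:ℝ) + (w + 1) + ν + (j:ℝ) - 1)))
      = a k * (Real.Gamma ((k:ℝ) + (w + 1)) * Real.Gamma ((k:ℝ) + (w + 1) + ν))
          / Real.Gamma (w + 1) := by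
    intro k _
    rw [MeasureTheory.integral_finset_sum _ (fun j _ => ((hbint k j).const_mul _))]
    simp only [integral_const_mul]
    have step : ∀ j ∈ Finset.range (k + 1),
        (a k * (-1 : ℝ) ^ k * k.factorial *
            (((-1:ℝ)^j / j.factorial) *
              (Real.Gamma ((k:ℝ) + ν + 1) / (Real.Gamma ((j:ℝ) + ν + 1) * (k - j).factorial))))
          * (∫ t in Ioi (0:ℝ), Real.exp (-t) * t ^ ((k:ℝ) + (w + 1) + ν + (j:ℝ) - 1))
        = (a k * (-1 : ℝ) ^ k * k.factorial) *
            (((-1:ℝ)^j / j.factorial) *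
              (Real.Gamma ((k:ℝ) + ν + 1) / (Real.Gamma ((j:ℝ) + ν + 1) * (k - j).factorial)) *
              Real.Gamma ((k:ℝ) + (w + 1) + ν + (j:ℝ))) := by
      intro j _
      rw [hbval k j]; ring
    calc ∑ j ∈ Finset.range (k + 1),
          (a k * (-1 : ℝ) ^ k * k.factorial *
            (((-1:ℝ)^j / j.factorial) *
              (Real.Gamma ((k:ℝ) + ν + 1) / (Real.Gamma ((j:ℝ) + ν + 1) * (k - j).factorial))))
          * (∫ t in Ioi (0:ℝ), Real.exp (-t) * t ^ ((k:ℝ) + (w + 1) + ν + (j:ℝ) - 1))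
        = (a k * (-1 : ℝ) ^ k * k.factorial) * ∑ j ∈ Finset.range (k + 1),
            (((-1:ℝ)^j / j.factorial) *
              (Real.Gamma ((k:ℝ) + ν + 1) / (Real.Gamma ((j:ℝ) + ν + 1) * (k - j).factorial)) *
              Real.Gamma ((k:ℝ) + (w + 1) + ν + (j:ℝ))) := by
          rw [Finset.mul_sum]; exact Finset.sum_congr rfl step
      _ = (a k * (-1 : ℝ) ^ k * k.factorial) *
            (((-1:ℝ)^k / k.factorial) *
              (Real.Gamma ((k:ℝ) + (w + 1)) * Real.Gamma ((k:ℝ) + (w + 1) + ν)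
                / Real.Gamma (w + 1))) := by
          rw [key_sum ν w hν hw1 k]
      _ = a k * (Real.Gamma ((k:ℝ) + (w + 1)) * Real.Gamma ((k:ℝ) + (w + 1) + ν))
            / Real.Gamma (w + 1) := by
          have h1 : ((-1:ℝ)^k) * ((-1:ℝ)^k) = 1 := by
            rw [← pow_add]; exact Even.neg_one_pow (Even.add_self k)
          have h2 : ((k.factorial : ℝ)) ≠ 0 := by positivity
          field_simp
          linear_combination a k * h1
  rw [Finset.sum_congr rfl hinner]
  rw [show ∀ (g : ℕ → ℝ), ∑ k ∈ Finset.range (n+1), a k * g k / Real.Gamma (w+1)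
      = (∑ k ∈ Finset.range (n+1), a k * g k) / Real.Gamma (w+1) from
    fun g => (Finset.sum_div _ _ _).symm]
  rw [E, zero_div]
end

section
/- Theorem 4: let k ∈ ℕ, ν ≥ 0, α > −1, and let (Q_n)_{n∈ℕ₀} be a sequence of real polynomials with deg Q_n = n. Then the orthogonality ∫₀^∞ Q_n(x) Q_m(x) ρ_{ν,k}(x) x^α dx = δ_{m,n} holds for all m, n ∈ ℕ₀ if and only if the composition orthogonality ∫₀^∞ ρ_{ν,k−1}(t) · ((Q_n · Q_m)(θ){t^α})(t) dt = δ_{m,n} / Γ(1+α) holds for all m, n ∈ ℕ₀. -/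
open MeasureTheory Real Set

/-- The ultra-exponential weight functions: `ρ_{ν,0}(x) = x^ν e^{-x}` and
`ρ_{ν,k+1}(x) = ∫₀^∞ e^{-x/t} ρ_{ν,k}(t) dt/t`. -/
noncomputable def rhoUE (ν : ℝ) : ℕ → ℝ → ℝ
  | 0 => fun x => x ^ ν * Real.exp (-x)
  | (k + 1) => fun x => ∫ t in Ioi (0:ℝ), Real.exp (-x / t) * rhoUE ν k t / t

/-- For a polynomial `p(x) = Σ_j a_j x^j`, the function `p(θ){t^α} = Σ_j a_j (1+α)_j t^{α+j}`,
where `(1+α)_j = Γ(1+α+j)/Γ(1+α)` is the Pochhammer symbol. -/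
noncomputable def polyThetaApply (p : Polynomial ℝ) (α : ℝ) (t : ℝ) : ℝ :=
  ∑ j ∈ Finset.range (p.natDegree + 1),
    p.coeff j * (Real.Gamma (1 + α + j) / Real.Gamma (1 + α)) * t ^ (α + (j : ℝ))

lemma rho_meas_s19 (ν : ℝ) : ∀ k, Measurable (rhoUE ν k)
  | 0 => by unfold rhoUE; fun_prop
  | (k + 1) => by
    have ih := rho_meas_s19 ν k
    have h : Measurable fun z : ℝ × ℝ =>
        Real.exp (-z.1 / z.2) * rhoUE ν k z.2 / z.2 := by fun_prop
    unfold rhoUE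
    exact (h.stronglyMeasurable.integral_prod_right').measurable

lemma rho_nonneg_s19 (ν : ℝ) : ∀ (k : ℕ) (x : ℝ), 0 < x → 0 ≤ rhoUE ν k x
  | 0, x, hx => by
    unfold rhoUE
    exact mul_nonneg (Real.rpow_nonneg hx.le ν) (Real.exp_nonneg _)
  | (k + 1), x, hx => by
    unfold rhoUE
    refine setIntegral_nonneg measurableSet_Ioi fun t ht => ?_
    have h := rho_nonneg_s19 ν k t ht
    have : (0:ℝ) < t := ht
    positivity

lemma inner_integrable (ν : ℝ) (k : ℕ) {x : ℝ} (hx : 0 < x)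
    (hInt : IntegrableOn (rhoUE ν k) (Ioi 0)) :
    IntegrableOn (fun t => Real.exp (-x / t) * rhoUE ν k t / t) (Ioi 0) := by
  have hm : AEStronglyMeasurable (fun t => Real.exp (-x / t) * rhoUE ν k t / t)
      (volume.restrict (Ioi 0)) := by
    have := rho_meas_s19 ν k
    apply Measurable.aestronglyMeasurable
    fun_prop
  refine Integrable.mono' (g := fun t => x⁻¹ * rhoUE ν k t) (hInt.const_mul x⁻¹) hm ?_
  filter_upwards [ae_restrict_mem measurableSet_Ioi] with t ht
  have ht' : (0:ℝ) < t := ht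
  have h0 : 0 ≤ rhoUE ν k t := rho_nonneg_s19 ν k t ht'
  rw [Real.norm_eq_abs, abs_of_nonneg (by positivity)]
  have key : Real.exp (-(x / t)) * (x / t) ≤ 1 := by
    rw [Real.exp_neg, inv_mul_le_iff₀ (Real.exp_pos _)]
    have := Real.add_one_le_exp (x / t)
    nlinarith [Real.exp_pos (x/t)]
  have h1 : Real.exp (-x / t) / t ≤ x⁻¹ := by
    have : Real.exp (-x / t) / t = (Real.exp (-(x / t)) * (x / t)) * x⁻¹ := by
      rw [neg_div]; field_simp
    rw [this]
    calc (Real.exp (-(x / t)) * (x / t)) * x⁻¹ ≤ 1 * x⁻¹ := by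
          apply mul_le_mul_of_nonneg_right key; positivity
      _ = x⁻¹ := one_mul _
  calc Real.exp (-x / t) * rhoUE ν k t / t = (Real.exp (-x / t) / t) * rhoUE ν k t := by ring
    _ ≤ x⁻¹ * rhoUE ν k t := mul_le_mul_of_nonneg_right h1 h0

lemma gamma_inner_integrable (β : ℝ) (hβ : -1 < β) {t : ℝ} (ht : 0 < t) :
    IntegrableOn (fun x => x ^ β * Real.exp (-x / t)) (Ioi (0:ℝ)) := by
  have h := integrableOn_rpow_mul_exp_neg_mul_rpow hβ one_pos (inv_pos.mpr ht)
  convert h using 2 with x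
  rw [Real.rpow_one]
  ring_nf

lemma gamma_inner_value (β : ℝ) (hβ : -1 < β) {t : ℝ} (ht : 0 < t) :
    ∫ x in Ioi (0:ℝ), x ^ β * Real.exp (-x / t) = Real.Gamma (β + 1) * t ^ (β + 1) := by
  have h := integral_rpow_mul_exp_neg_mul_rpow (one_pos) hβ (inv_pos.mpr ht)
  have he : ∀ x : ℝ, x ^ β * Real.exp (-t⁻¹ * x ^ (1:ℝ)) = x ^ β * Real.exp (-x / t) := by
    intro x; rw [Real.rpow_one]; congr 1; congr 1; rw [neg_div, div_eq_mul_inv, neg_mul, mul_comm]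
  simp_rw [he] at h
  rw [h, Real.inv_rpow ht.le, ← Real.rpow_neg ht.le]
  norm_num
  ring

lemma step (ν : ℝ) (k : ℕ) (β : ℝ) (hβ : -1 < β)
    (hInt0 : IntegrableOn (rhoUE ν k) (Ioi 0))
    (hIntβ : IntegrableOn (fun t => t ^ β * rhoUE ν k t) (Ioi 0)) :
    IntegrableOn (fun x => x ^ β * rhoUE ν (k+1) x) (Ioi 0) ∧
    ∫ x in Ioi (0:ℝ), x ^ β * rhoUE ν (k+1) x
      = Real.Gamma (β + 1) * ∫ t in Ioi (0:ℝ), t ^ β * rhoUE ν k t := by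
  set μ := volume.restrict (Ioi (0:ℝ)) with hμ
  set g := rhoUE ν k with hg
  have hgm := rho_meas_s19 ν k
  have hΓpos : 0 < Real.Gamma (β + 1) := Real.Gamma_pos_of_pos (by linarith)
  have hIβ : 0 ≤ ∫ t in Ioi (0:ℝ), t ^ β * g t :=
    setIntegral_nonneg measurableSet_Ioi fun t ht =>
      mul_nonneg (Real.rpow_nonneg (le_of_lt ht) β) (rho_nonneg_s19 ν k t ht)
  -- the double integrand
  set F : ℝ → ℝ → ENNReal := fun x t =>
    ENNReal.ofReal (x ^ β * (Real.exp (-x / t) * g t / t)) with hF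
  -- Claim A
  have claimA : ∀ x ∈ Ioi (0:ℝ),
      ENNReal.ofReal (x ^ β * rhoUE ν (k+1) x) = ∫⁻ t, F x t ∂μ := by
    intro x hx
    have hx' : (0:ℝ) < x := hx
    have hint := inner_integrable ν k hx' hInt0
    have hnn : 0 ≤ᵐ[μ] fun t => Real.exp (-x / t) * g t / t := by
      filter_upwards [ae_restrict_mem measurableSet_Ioi] with t ht
      have ht' : (0:ℝ) < t := ht
      have := rho_nonneg_s19 ν k t ht'
      positivity
    have h1 : ENNReal.ofReal (∫ t, (fun t => Real.exp (-x / t) * g t / t) t ∂μ)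
        = ∫⁻ t, ENNReal.ofReal (Real.exp (-x / t) * g t / t) ∂μ :=
      ofReal_integral_eq_lintegral_ofReal hint hnn
    have h2 : rhoUE ν (k+1) x = ∫ t, (fun t => Real.exp (-x / t) * g t / t) t ∂μ := rfl
    rw [h2]
    calc ENNReal.ofReal (x ^ β * ∫ t, Real.exp (-x / t) * g t / t ∂μ)
        = ENNReal.ofReal (x ^ β) * ENNReal.ofReal (∫ t, Real.exp (-x / t) * g t / t ∂μ) :=
          ENNReal.ofReal_mul (Real.rpow_nonneg hx'.le β)
      _ = ENNReal.ofReal (x ^ β) * ∫⁻ t, ENNReal.ofReal (Real.exp (-x / t) * g t / t) ∂μ := by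
          rw [h1]
      _ = ∫⁻ t, ENNReal.ofReal (x ^ β) * ENNReal.ofReal (Real.exp (-x / t) * g t / t) ∂μ := by
          rw [lintegral_const_mul' _ _ ENNReal.ofReal_ne_top]
      _ = ∫⁻ t, F x t ∂μ := by
          refine lintegral_congr fun t => ?_
          simp only [hF]
          rw [← ENNReal.ofReal_mul (Real.rpow_nonneg hx'.le β)]
  -- Claim B
  have claimB : ∀ t ∈ Ioi (0:ℝ),
      ∫⁻ x, F x t ∂μ = ENNReal.ofReal (Real.Gamma (β + 1) * (t ^ β * g t)) := by
    intro t ht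
    have ht' : (0:ℝ) < t := ht
    have hgt : 0 ≤ g t := rho_nonneg_s19 ν k t ht'
    have hrearr : ∀ x : ℝ, x ^ β * (Real.exp (-x / t) * g t / t)
        = (x ^ β * Real.exp (-x / t)) * (g t / t) := fun x => by ring
    have hnn2 : 0 ≤ g t / t := by positivity
    calc ∫⁻ x, F x t ∂μ
        = ∫⁻ x, ENNReal.ofReal (x ^ β * Real.exp (-x / t)) * ENNReal.ofReal (g t / t) ∂μ := by
          refine lintegral_congr fun x => ?_
          simp only [hF]
          rw [hrearr, ENNReal.ofReal_mul' hnn2]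
      _ = (∫⁻ x, ENNReal.ofReal (x ^ β * Real.exp (-x / t)) ∂μ) * ENNReal.ofReal (g t / t) := by
          rw [lintegral_mul_const' _ _ ENNReal.ofReal_ne_top]
      _ = ENNReal.ofReal (∫ x, x ^ β * Real.exp (-x / t) ∂μ) * ENNReal.ofReal (g t / t) := by
          rw [ofReal_integral_eq_lintegral_ofReal (gamma_inner_integrable β hβ ht') ?_]
          filter_upwards [ae_restrict_mem measurableSet_Ioi] with x hx
          have hx' : (0:ℝ) < x := hx
          positivity
      _ = ENNReal.ofReal (Real.Gamma (β + 1) * t ^ (β + 1)) * ENNReal.ofReal (g t / t) := by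
          rw [← gamma_inner_value β hβ ht']
      _ = ENNReal.ofReal (Real.Gamma (β + 1) * (t ^ β * g t)) := by
          rw [← ENNReal.ofReal_mul (by positivity)]
          congr 1
          rw [Real.rpow_add_one ht'.ne']
          field_simp
  -- measurability of uncurried F
  have hFm : AEMeasurable (fun z : ℝ × ℝ => F z.1 z.2) (μ.prod μ) := by
    apply Measurable.aemeasurable
    apply ENNReal.measurable_ofReal.comp
    fun_prop
  -- the main lintegral computation
  have main : ∫⁻ x, ENNReal.ofReal (x ^ β * rhoUE ν (k+1) x) ∂μ
      = ENNReal.ofReal (Real.Gamma (β + 1) * ∫ t in Ioi (0:ℝ), t ^ β * g t) := by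
    calc ∫⁻ x, ENNReal.ofReal (x ^ β * rhoUE ν (k+1) x) ∂μ
        = ∫⁻ x, ∫⁻ t, F x t ∂μ ∂μ := by
          rw [hμ]
          exact setLIntegral_congr_fun_ae measurableSet_Ioi
            (Filter.Eventually.of_forall fun x hx => claimA x hx)
      _ = ∫⁻ t, ∫⁻ x, F x t ∂μ ∂μ := lintegral_lintegral_swap hFm
      _ = ∫⁻ t, ENNReal.ofReal (Real.Gamma (β + 1) * (t ^ β * g t)) ∂μ := by
          rw [hμ]
          exact setLIntegral_congr_fun_ae measurableSet_Ioi
            (Filter.Eventually.of_forall fun t ht => claimB t ht)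
      _ = ENNReal.ofReal (Real.Gamma (β + 1)) * ∫⁻ t, ENNReal.ofReal (t ^ β * g t) ∂μ := by
          rw [← lintegral_const_mul' _ _ ENNReal.ofReal_ne_top]
          refine lintegral_congr fun t => ?_
          rw [ENNReal.ofReal_mul hΓpos.le]
      _ = ENNReal.ofReal (Real.Gamma (β + 1)) * ENNReal.ofReal (∫ t in Ioi (0:ℝ), t ^ β * g t) := by
          rw [ofReal_integral_eq_lintegral_ofReal hIntβ ?_]
          filter_upwards [ae_restrict_mem measurableSet_Ioi] with t ht
          have ht' : (0:ℝ) < t := ht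
          have := rho_nonneg_s19 ν k t ht'
          positivity
      _ = ENNReal.ofReal (Real.Gamma (β + 1) * ∫ t in Ioi (0:ℝ), t ^ β * g t) :=
          (ENNReal.ofReal_mul hΓpos.le).symm
  -- nonneg a.e. of the level-(k+1) integrand
  have hnn3 : 0 ≤ᵐ[μ] fun x => x ^ β * rhoUE ν (k+1) x := by
    filter_upwards [ae_restrict_mem measurableSet_Ioi] with x hx
    have hx' : (0:ℝ) < x := hx
    have := rho_nonneg_s19 ν (k+1) x hx'
    positivity
  have hmeas : AEStronglyMeasurable (fun x => x ^ β * rhoUE ν (k+1) x) μ := by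
    have := rho_meas_s19 ν (k+1)
    apply Measurable.aestronglyMeasurable
    fun_prop
  have hfin : HasFiniteIntegral (fun x => x ^ β * rhoUE ν (k+1) x) μ := by
    rw [hasFiniteIntegral_iff_ofReal hnn3, main]
    exact ENNReal.ofReal_lt_top
  refine ⟨⟨hmeas, hfin⟩, ?_⟩
  have := integral_eq_lintegral_of_nonneg_ae hnn3 hmeas
  rw [hμ] at this ⊢
  rw [this, main, ENNReal.toReal_ofReal (by positivity)]

lemma moments (ν : ℝ) (hν : 0 ≤ ν) :
    ∀ (k : ℕ) (β : ℝ), -1 < β → IntegrableOn (fun x => x ^ β * rhoUE ν k x) (Ioi 0)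
  | 0, β, hβ => by
    have h := integrableOn_rpow_mul_exp_neg_mul_rpow
      (show -1 < β + ν by linarith) one_pos one_pos
    refine h.congr_fun (fun x hx => ?_) measurableSet_Ioi
    have hx' : (0:ℝ) < x := hx
    show x ^ (β + ν) * Real.exp (-1 * x ^ (1:ℝ)) = x ^ β * rhoUE ν 0 x
    rw [Real.rpow_one, neg_one_mul, Real.rpow_add hx']
    show x ^ β * x ^ ν * Real.exp (-x) = x ^ β * (x ^ ν * Real.exp (-x))
    ring
  | (k+1), β, hβ => by
    have h0 : IntegrableOn (rhoUE ν k) (Ioi 0) := by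
      have h := moments ν hν k 0 (by norm_num)
      refine h.congr_fun (fun x hx => ?_) measurableSet_Ioi
      dsimp only; rw [Real.rpow_zero, one_mul]
    exact (step ν k β hβ h0 (moments ν hν k β hβ)).1

lemma moment_value (ν : ℝ) (hν : 0 ≤ ν) (k : ℕ) (β : ℝ) (hβ : -1 < β) :
    ∫ x in Ioi (0:ℝ), x ^ β * rhoUE ν (k+1) x
      = Real.Gamma (β + 1) * ∫ t in Ioi (0:ℝ), t ^ β * rhoUE ν k t := by
  have h0 : IntegrableOn (rhoUE ν k) (Ioi 0) := by
    have h := moments ν hν k 0 (by norm_num)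
    refine h.congr_fun (fun x hx => ?_) measurableSet_Ioi
    dsimp only; rw [Real.rpow_zero, one_mul]
  exact (step ν k β hβ h0 (moments ν hν k β hβ)).2

lemma bridge (ν α : ℝ) (hν : 0 ≤ ν) (hα : -1 < α) (k : ℕ) (p : Polynomial ℝ) :
    ∫ x in Ioi (0:ℝ), p.eval x * rhoUE ν (k+1) x * x ^ α
      = Real.Gamma (1 + α) * ∫ t in Ioi (0:ℝ), rhoUE ν k t * polyThetaApply p α t := by
  set d := p.natDegree with hd
  have hΓpos : 0 < Real.Gamma (1 + α) := Real.Gamma_pos_of_pos (by linarith)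
  have hβj : ∀ j : ℕ, (-1:ℝ) < α + j := fun j => by
    have : (0:ℝ) ≤ j := Nat.cast_nonneg j
    linarith
  -- LHS
  have hL : ∫ x in Ioi (0:ℝ), p.eval x * rhoUE ν (k+1) x * x ^ α
      = ∑ j ∈ Finset.range (d+1), p.coeff j *
          ∫ x in Ioi (0:ℝ), x ^ (α + (j:ℝ)) * rhoUE ν (k+1) x := by
    have e1 : ∫ x in Ioi (0:ℝ), p.eval x * rhoUE ν (k+1) x * x ^ α
        = ∫ x in Ioi (0:ℝ), ∑ j ∈ Finset.range (d+1),
            p.coeff j * (x ^ (α + (j:ℝ)) * rhoUE ν (k+1) x) := by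
      refine setIntegral_congr_fun measurableSet_Ioi fun x hx => ?_
      have hx' : (0:ℝ) < x := hx
      rw [Polynomial.eval_eq_sum_range, Finset.sum_mul, Finset.sum_mul]
      refine Finset.sum_congr rfl fun j _ => ?_
      rw [Real.rpow_add hx', Real.rpow_natCast]
      ring
    rw [e1, integral_finset_sum]
    · refine Finset.sum_congr rfl fun j _ => ?_
      rw [integral_const_mul]
    · intro j _
      exact ((moments ν hν (k+1) (α + j) (hβj j)).const_mul _)
  -- RHS
  have hR : ∫ t in Ioi (0:ℝ), rhoUE ν k t * polyThetaApply p α t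
      = ∑ j ∈ Finset.range (d+1), (p.coeff j * (Real.Gamma (1 + α + j) / Real.Gamma (1 + α))) *
          ∫ t in Ioi (0:ℝ), t ^ (α + (j:ℝ)) * rhoUE ν k t := by
    have e2 : ∫ t in Ioi (0:ℝ), rhoUE ν k t * polyThetaApply p α t
        = ∫ t in Ioi (0:ℝ), ∑ j ∈ Finset.range (d+1),
            (p.coeff j * (Real.Gamma (1 + α + j) / Real.Gamma (1 + α))) *
              (t ^ (α + (j:ℝ)) * rhoUE ν k t) := by
      refine setIntegral_congr_fun measurableSet_Ioi fun t ht => ?_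
      unfold polyThetaApply
      rw [Finset.mul_sum]
      refine Finset.sum_congr rfl fun j _ => ?_
      ring
    rw [e2, integral_finset_sum]
    · refine Finset.sum_congr rfl fun j _ => ?_
      rw [integral_const_mul]
    · intro j _
      exact ((moments ν hν k (α + j) (hβj j)).const_mul _)
  rw [hL, hR, Finset.mul_sum]
  refine Finset.sum_congr rfl fun j _ => ?_
  rw [moment_value ν hν k (α + j) (hβj j)]
  have hΓeq : Real.Gamma (α + (j:ℝ) + 1) = Real.Gamma (1 + α + j) := by ring_nf
  rw [hΓeq]
  field_simp

theorem ultraexponential_orthogonality_iff_composition_orthogonality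
    (k : ℕ) (hk : 1 ≤ k) (ν α : ℝ) (hν : 0 ≤ ν) (hα : -1 < α)
    (Q : ℕ → Polynomial ℝ) (hdeg : ∀ n, (Q n).natDegree = n) :
    (∀ m n : ℕ,
        ∫ x in Ioi (0:ℝ), (Q n).eval x * (Q m).eval x * rhoUE ν k x * x ^ α
          = if m = n then 1 else 0)
      ↔ (∀ m n : ℕ,
        ∫ t in Ioi (0:ℝ), rhoUE ν (k - 1) t * polyThetaApply (Q n * Q m) α t
          = (if m = n then 1 else 0) / Real.Gamma (1 + α)) := by
  obtain ⟨k', rfl⟩ : ∃ k', k = k' + 1 := ⟨k - 1, (Nat.succ_pred_eq_of_pos hk).symm⟩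
  have hk1 : k' + 1 - 1 = k' := rfl
  have hΓpos : 0 < Real.Gamma (1 + α) := Real.Gamma_pos_of_pos (by linarith)
  have key : ∀ m n : ℕ,
      ∫ x in Ioi (0:ℝ), (Q n).eval x * (Q m).eval x * rhoUE ν (k'+1) x * x ^ α
        = Real.Gamma (1 + α) *
          ∫ t in Ioi (0:ℝ), rhoUE ν k' t * polyThetaApply (Q n * Q m) α t := by
    intro m n
    have h := bridge ν α hν hα k' (Q n * Q m)
    have e : ∫ x in Ioi (0:ℝ), (Q n * Q m).eval x * rhoUE ν (k'+1) x * x ^ α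
        = ∫ x in Ioi (0:ℝ), (Q n).eval x * (Q m).eval x * rhoUE ν (k'+1) x * x ^ α := by
      refine setIntegral_congr_fun measurableSet_Ioi fun x hx => ?_
      rw [Polynomial.eval_mul]
    rw [e] at h
    exact h
  rw [hk1]
  constructor
  · intro h m n
    have h1 := h m n
    rw [key m n] at h1
    rw [eq_div_iff hΓpos.ne']
    linarith [h1]
  · intro h m n
    rw [key m n, h m n, mul_div_cancel₀ _ hΓpos.ne']
end
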